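/- Let μ > 0, σ > 0 and let 0 < p < μ. Then the bound max{ 1 + σ²/(μ−p)², μ/p + σ²/(p(μ−p)) } on the ratio OPT(F)/REV(p;F) over F ∈ 𝔽_{μ,σ} is tight: for every ε > 0 there exists a two-point mass distribution F with mean μ and variance exactly σ² such that OPT(F) ≥ ( max{ 1 + σ²/(μ−p)², μ/p + σ²/(p(μ−p)) } − ε ) · REV(p;F). (Such F are obtained as F_x placing mass σ²/(σ²+(μ−x)²) at x and the remaining mass at μ + σ²/(μ−x), with x → p⁻.) -/

import Mathlib

open MeasureTheory

/-- Revenue of posting price `p` against valuation distribution `F`: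
`REV(p;F) = p · P(X ≥ p)`. -/
noncomputable def rev (F : Measure ℝ) (p : ℝ) : ℝ :=
  p * (F (Set.Ici p)).toReal

/-- Optimal revenue `OPT(F) = sup_{p ≥ 0} p · P(X ≥ p)`. -/
noncomputable def opt (F : Measure ℝ) : ℝ :=
  ⨆ p ∈ Set.Ici (0 : ℝ), rev F p

/-- Revenue of a randomized pricing mechanism `A` (a measure over prices):
`REV(A;F) = E_{p∼A}[REV(p;F)]`. -/
noncomputable def mrev (A F : Measure ℝ) : ℝ :=
  ∫ p, rev F p ∂A

/-- `F` is a `(μ,σ)`-distributed distribution: a probability measure on `[0,∞)`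
with mean `m` and variance at most `s²`. -/
structure MeanVarLe (F : Measure ℝ) (m s : ℝ) : Prop where
  prob : IsProbabilityMeasure F
  supp : F (Set.Iio 0) = 0
  int_mean : Integrable (fun x => x) F
  int_sq : Integrable (fun x => x ^ 2) F
  mean : ∫ x, x ∂F = m
  var_le : ∫ x, (x - m) ^ 2 ∂F ≤ s ^ 2

/-- A randomized pricing mechanism: a probability measure over prices in `[0,∞)`. -/
def IsPriceMech (A : Measure ℝ) : Prop :=
  IsProbabilityMeasure A ∧ A (Set.Iio 0) = 0

/-- A two-point mass distribution with mean `m` and variance exactly `s²`: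
mass `α` at `x` and mass `1−α` at `y`, with `0 ≤ x < y`, `αx + (1−α)y = m` and
`αx² + (1−α)y² = m² + s²`. -/
def IsTwoPoint (F : Measure ℝ) (m s : ℝ) : Prop :=
  ∃ x y α : ℝ, 0 ≤ x ∧ x < y ∧ 0 ≤ α ∧ α ≤ 1 ∧
    α * x + (1 - α) * y = m ∧ α * x ^ 2 + (1 - α) * y ^ 2 = m ^ 2 + s ^ 2 ∧
    F = ENNReal.ofReal α • Measure.dirac x + ENNReal.ofReal (1 - α) • Measure.dirac y

lemma alg1 (p d s ε η : ℝ) (hp : 0 < p) (hd : 0 < d) (hs : 0 < s) (hε : 0 < ε)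
    (hη0 : 0 < η) (hηd : η ≤ d) (hη1 : η*(3*p*s*d + d^2*s + 4*d^4) ≤ ε*p*d^4) :
    (d^2 + s - ε*d^2) * (p * (d+η)^2) ≤ (p - η) * (s + (d+η)^2) * d^2 := by
  have h_e2le : (d+η)^2 ≤ 4*d^2 := by nlinarith
  have h_e2ge : d^2 ≤ (d+η)^2 := by nlinarith
  have hA : ε*p*d^2*d^2 ≤ ε*p*d^2*(d+η)^2 :=
    mul_le_mul_of_nonneg_left h_e2ge (by positivity)
  have hB : d^2*η*(s+(d+η)^2) ≤ d^2*η*(s+4*d^2) :=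
    mul_le_mul_of_nonneg_left (by linarith) (by positivity)
  have hC : p*s*(2*d*η+η^2) ≤ p*s*(3*d*η) :=
    mul_le_mul_of_nonneg_left (by nlinarith) (by positivity)
  nlinarith [hA, hB, hC, hη1]

lemma twopt_mean (μ s e : ℝ) (he : 0 < e) (hs : 0 < s) :
    s/(s+e^2) * (μ - e) + (1 - s/(s+e^2)) * (μ + s/e) = μ := by
  have h1 : s + e^2 ≠ 0 := by positivity
  field_simp
  ring

lemma twopt_sq (μ s e : ℝ) (he : 0 < e) (hs : 0 < s) :
    s/(s+e^2) * (μ - e)^2 + (1 - s/(s+e^2)) * (μ + s/e)^2 = μ^2 + s := by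
  have h1 : s + e^2 ≠ 0 := by positivity
  field_simp
  ring

set_option maxHeartbeats 1600000 in
/-- For `μ, σ > 0` and `0 < p < μ`, the bound
`max{1 + σ²/(μ−p)², μ/p + σ²/(p(μ−p))}` on `OPT(F)/REV(p;F)` is tight: for every `ε > 0`
there is a two-point mass distribution `F` with mean `μ` and variance exactly `σ²` such
that `OPT(F) ≥ (max{…} − ε)·REV(p;F)`. -/
theorem stmt3 (μ σ p : ℝ) (hμ : 0 < μ) (hσ : 0 < σ) (hp0 : 0 < p) (hpμ : p < μ) :
    ∀ ε : ℝ, 0 < ε → ∃ F : Measure ℝ, IsTwoPoint F μ σ ∧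
      (max (1 + σ ^ 2 / (μ - p) ^ 2) (μ / p + σ ^ 2 / (p * (μ - p))) - ε) * rev F p
        ≤ opt F := by
  intro ε hε
  have hd : (0:ℝ) < μ - p := sub_pos.mpr hpμ
  set d : ℝ := μ - p with hd_def
  set s : ℝ := σ^2 with hs_def
  have hs0 : 0 < s := by positivity
  set η : ℝ := min (min d (p/2)) (min (ε*p*d^4/(3*p*s*d + d^2*s + 4*d^4)) (ε*p*d^2/s))
    with hη_def
  have hden : (0:ℝ) < 3*p*s*d + d^2*s + 4*d^4 := by positivity
  have hη0 : 0 < η := by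
    refine lt_min (lt_min hd (by positivity)) (lt_min ?_ ?_) <;> positivity
  have hηd : η ≤ d := le_trans (min_le_left _ _) (min_le_left _ _)
  have hηp : η ≤ p/2 := le_trans (min_le_left _ _) (min_le_right _ _)
  have hη1 : η*(3*p*s*d + d^2*s + 4*d^4) ≤ ε*p*d^4 := by
    have h : η ≤ ε*p*d^4/(3*p*s*d + d^2*s + 4*d^4) :=
      le_trans (min_le_right _ _) (min_le_left _ _)
    rw [le_div_iff₀ hden] at h
    linarith
  have hη2 : s*η ≤ ε*p*d^2 := by
    have h : η ≤ ε*p*d^2/s := le_trans (min_le_right _ _) (min_le_right _ _)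
    rw [le_div_iff₀ hs0] at h
    linarith
  set e : ℝ := d + η with he_def
  have he0 : 0 < e := by positivity
  have hde : d ≤ e := by simp [he_def]; linarith
  set x : ℝ := μ - e with hx_def
  set y : ℝ := μ + s/e with hy_def
  set α : ℝ := s/(s+e^2) with hα_def
  have hxp : x = p - η := by rw [hx_def, he_def, hd_def]; ring
  have hx0 : 0 ≤ x := by rw [hxp]; linarith
  have hxltp : x < p := by rw [hxp]; linarith
  have hse : 0 < s/e := by positivity
  have hμy : μ < y := by rw [hy_def]; linarith
  have hxy : x < y := by
    have : x < μ := by rw [hx_def]; linarith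
    linarith
  have hα0 : 0 ≤ α := by positivity
  have hα1 : α ≤ 1 := by
    rw [hα_def, div_le_one (by positivity)]
    nlinarith
  have h1α : 1 - α = e^2/(s+e^2) := by
    rw [hα_def]; field_simp; ring
  have h1α0 : 0 ≤ 1 - α := by linarith
  clear_value α y x e η s d
  set F : Measure ℝ :=
    ENNReal.ofReal α • Measure.dirac x + ENNReal.ofReal (1 - α) • Measure.dirac y
    with hF_def
  have hFq : ∀ q : ℝ, F (Set.Ici q) =
      ENNReal.ofReal α * (Set.Ici q).indicator 1 x
      + ENNReal.ofReal (1-α) * (Set.Ici q).indicator 1 y := by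
    intro q
    simp [hF_def, Measure.dirac_apply' _ measurableSet_Ici, smul_eq_mul]
  have hsum : ENNReal.ofReal α + ENNReal.ofReal (1-α) = 1 := by
    rw [← ENNReal.ofReal_add hα0 h1α0]
    norm_num
  have hFx : F (Set.Ici x) = 1 := by
    rw [hFq, Set.indicator_of_mem (by simp) (1 : ℝ → ENNReal),
      Set.indicator_of_mem (by simp [Set.mem_Ici]; exact hxy.le) (1 : ℝ → ENNReal)]
    simpa using hsum
  have hFp : F (Set.Ici p) = ENNReal.ofReal (1-α) := by
    rw [hFq, Set.indicator_of_notMem (by simp [Set.mem_Ici]; exact hxltp) (1 : ℝ → ENNReal),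
      Set.indicator_of_mem (by simp [Set.mem_Ici]; linarith) (1 : ℝ → ENNReal)]
    simp
  have hFy : F (Set.Ici y) = ENNReal.ofReal (1-α) := by
    rw [hFq, Set.indicator_of_notMem (by simp [Set.mem_Ici]; exact hxy) (1 : ℝ → ENNReal),
      Set.indicator_of_mem (by simp) (1 : ℝ → ENNReal)]
    simp
  have hFuniv : F Set.univ = 1 := by
    simp [hF_def, smul_eq_mul, hsum]
  have hrevx : rev F x = x := by rw [rev, hFx]; simp
  have hrevp : rev F p = p * (1-α) := by
    rw [rev, hFp, ENNReal.toReal_ofReal h1α0]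
  have hrevy : rev F y = y * (1-α) := by
    rw [rev, hFy, ENNReal.toReal_ofReal h1α0]
  -- a uniform bound on rev F q
  have hy0 : 0 ≤ y := by linarith
  have hrev_le : ∀ q : ℝ, rev F q ≤ y := by
    intro q
    rcases le_or_gt q y with hqy | hqy
    · rcases le_or_gt 0 q with hq0 | hq0
      · have h1 : (F (Set.Ici q)).toReal ≤ 1 := by
          have := measure_mono (Set.subset_univ (Set.Ici q)) (μ := F)
          rw [hFuniv] at this
          simpa using ENNReal.toReal_mono (by simp) this
        calc rev F q = q * (F (Set.Ici q)).toReal := rfl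
          _ ≤ q * 1 := by
              exact mul_le_mul_of_nonneg_left h1 hq0
          _ = q := mul_one q
          _ ≤ y := hqy
      · have : rev F q ≤ 0 :=
          mul_nonpos_of_nonpos_of_nonneg hq0.le ENNReal.toReal_nonneg
        linarith
    · have hz : F (Set.Ici q) = 0 := by
        rw [hFq, Set.indicator_of_notMem (by simp [Set.mem_Ici]; linarith) (1 : ℝ → ENNReal),
          Set.indicator_of_notMem (by simp [Set.mem_Ici]; exact hqy) (1 : ℝ → ENNReal)]
        simp
      rw [rev, hz]
      simpa using hy0
  have hbdd : BddAbove (Set.range fun q : ℝ => ⨆ (_ : q ∈ Set.Ici (0:ℝ)), rev F q) := by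
    refine ⟨y, ?_⟩
    rintro _ ⟨q, rfl⟩
    dsimp only
    by_cases hq : q ∈ Set.Ici (0:ℝ)
    · rw [ciSup_pos hq]; exact hrev_le q
    · haveI : IsEmpty (q ∈ Set.Ici (0:ℝ)) := ⟨hq⟩
      rw [Real.iSup_of_isEmpty]
      exact hy0
  have hopt : ∀ q : ℝ, 0 ≤ q → rev F q ≤ opt F := by
    intro q hq
    have h1 : (⨆ (_ : q ∈ Set.Ici (0:ℝ)), rev F q) ≤ opt F := le_ciSup hbdd q
    rwa [ciSup_pos (by exact hq : q ∈ Set.Ici (0:ℝ))] at h1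
  refine ⟨F, ⟨x, y, α, hx0, hxy, hα0, hα1, ?_, ?_, hF_def⟩, ?_⟩
  · rw [hα_def, hx_def, hy_def]; exact twopt_mean μ s e he0 hs0
  · rw [hα_def, hx_def, hy_def, ← hs_def]; exact twopt_sq μ s e he0 hs0
  · -- main inequality
    have key1 : (1 + s / d^2 - ε) * (p * (1-α)) ≤ x := by
      rw [h1α]
      have hrw : (1 + s / d^2 - ε) * (p * (e^2/(s+e^2)))
          = ((d^2 + s - ε*d^2) * (p * e^2)) / (d^2 * (s+e^2)) := by
        field_simp
      rw [hrw, div_le_iff₀ (by positivity)]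
      have := alg1 p d s ε η hp0 hd hs0 hε hη0 hηd hη1
      rw [← he_def] at this
      rw [hxp]
      linear_combination this
    have key2 : (μ / p + s / (p * d) - ε) * (p * (1-α)) ≤ y * (1-α) := by
      have hyb : (μ / p + s / (p * d) - ε) * p ≤ y := by
        have hrw : (μ / p + s / (p * d) - ε) * p = μ + s/d - ε*p := by
          field_simp
        rw [hrw, hy_def]
        have : s/d - s/e ≤ ε*p := by
          rw [div_sub_div _ _ hd.ne' he0.ne', div_le_iff₀ (by positivity)]
          have h1 : s * e - d * s = s * η := by rw [he_def]; ring
          rw [h1]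
          have h2 : s * η ≤ ε * p * d^2 := by linarith [hη2]
          nlinarith [mul_le_mul_of_nonneg_left hde (mul_nonneg (mul_nonneg hε.le hp0.le) hd.le)]
        linarith
      calc (μ / p + s / (p * d) - ε) * (p * (1-α))
          = ((μ / p + s / (p * d) - ε) * p) * (1-α) := by ring
        _ ≤ y * (1-α) := mul_le_mul_of_nonneg_right hyb h1α0
    have hmax : (max (1 + s / d^2) (μ / p + s / (p * d)) - ε) * rev F p
        ≤ max (rev F x) (rev F y) := by
      rw [hrevp, hrevx, hrevy, ← max_sub_sub_right]
      have hc : 0 ≤ p * (1-α) := mul_nonneg hp0.le h1α0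
      rw [max_mul_of_nonneg _ _ hc]
      exact max_le_max key1 key2
    calc (max (1 + s / d^2) (μ / p + s / (p * d)) - ε) * rev F p
        ≤ max (rev F x) (rev F y) := hmax
      _ ≤ opt F := max_le (hopt x hx0) (hopt y hy0)
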